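/- PEU is at most SWU: for any sequence t and q-sequence S with t ⊑ S, PEU(t,S) ≤ u(S), and hence PEU(t,D) ≤ SWU(t,D) for any database D. -/

import Mathlib

open scoped BigOperators

attribute [local instance] Classical.propDecidable

noncomputable section

abbrev Item := ℕ
abbrev QItemset := Item →₀ ℝ
abbrev QSeq := List QItemset
abbrev Pattern := List (Finset Item)
abbrev DB := Finset QSeq

/-- All item utilities of `S` are nonnegative. -/
def NonNegS (S : QSeq) : Prop := ∀ E ∈ S, ∀ i : Item, 0 ≤ E i

/-- Utility of an itemset `e` inside a q-itemset `E`. -/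
def itemsetUtil (e : Finset Item) (E : QItemset) : ℝ := ∑ i ∈ e, E i

/-- Total utility `u(S)` of a q-sequence. -/
def seqUtil (S : QSeq) : ℝ := (S.map fun E => ∑ i ∈ E.support, E i).sum

/-- `js` is the (0-based) position list of an instance of pattern `t` in `S`. -/
def IsInstance (t : Pattern) (S : QSeq) (js : List ℕ) : Prop :=
  js.length = t.length ∧ js.Pairwise (· < ·) ∧ (∀ j ∈ js, j < S.length) ∧
    ∀ p ∈ js.zip t, p.2 ⊆ (S.getD p.1 0).support

/-- Utility of the instance of `t` at positions `js` in `S`. -/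
def instUtil (t : Pattern) (S : QSeq) (js : List ℕ) : ℝ :=
  ((js.zip t).map fun p => itemsetUtil p.2 (S.getD p.1 0)).sum

/-- `t ⊑ S`. -/
def Contains (t : Pattern) (S : QSeq) : Prop := ∃ js, IsInstance t S js

/-- `u(t,S)`: maximum instance utility of `t` in `S`. -/
def patUtilS (t : Pattern) (S : QSeq) : ℝ :=
  sSup {x | ∃ js, IsInstance t S js ∧ x = instUtil t S js}

/-- `u(t,D)`. -/
def patUtilD (t : Pattern) (D : DB) : ℝ :=
  ∑ S ∈ D, if Contains t S then patUtilS t S else 0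

/-- `p` is an extension position of `t` in `S`. -/
def IsExtPos (t : Pattern) (S : QSeq) (p : ℕ) : Prop :=
  ∃ js, IsInstance t S js ∧ js.getLast? = some p

/-- `u(t,p,S)`: maximum instance utility among instances with extension position `p`. -/
def patUtilP (t : Pattern) (S : QSeq) (p : ℕ) : ℝ :=
  sSup {x | ∃ js, IsInstance t S js ∧ js.getLast? = some p ∧ x = instUtil t S js}

/-- The utilities of the items of `S`, flattened in order (items within an
itemset sorted alphabetically). -/
def flatUtils (S : QSeq) : List ℝ :=
  (S.map fun E => (E.support.sort (· ≤ ·)).map fun i => E i).flatten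

/-- `u(S/_m)`: utility of the remaining q-sequence after (1-based) flattened index `m`. -/
def remUtil (S : QSeq) (m : ℕ) : ℝ := ((flatUtils S).drop m).sum

/-- The extension item of a pattern: the last item of its last itemset. -/
def extItem (t : Pattern) : Item := WithBot.unbotD 0 (t.getLastD ∅).max

/-- 1-based flattened index of item `i` placed in itemset number `p` of `S`. -/
def flatIdx (S : QSeq) (p : ℕ) (i : Item) : ℕ :=
  ((S.take p).map fun E => E.support.card).sum +
    ((S.getD p 0).support.sort (· ≤ ·)).idxOf i + 1

/-- `I(t,p)`: flattened index of the extension item of `t` at extension position `p`. -/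
def extIdx (t : Pattern) (S : QSeq) (p : ℕ) : ℕ := flatIdx S p (extItem t)

/-- `PEU(t,p,S)`. -/
def peuP (t : Pattern) (S : QSeq) (p : ℕ) : ℝ :=
  if 0 ≤ remUtil S (extIdx t S p) then patUtilP t S p + remUtil S (extIdx t S p) else 0

/-- `PEU(t,S)`; by convention `PEU(⟨⟩,S) = u(S)`. -/
def peu (t : Pattern) (S : QSeq) : ℝ :=
  if t = [] then seqUtil S
  else sSup {x | ∃ p, IsExtPos t S p ∧ x = peuP t S p}

/-- `PEU(t,D)`. -/
def peuD (t : Pattern) (D : DB) : ℝ :=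
  ∑ S ∈ D, if Contains t S then peu t S else 0

/-- S-Extension: `t ⋄ₛ w`. -/
def sExt (t w : Pattern) : Pattern := t ++ w

/-- I-Extension: `t ⋄ᵢ w`. -/
def iExt (t w : Pattern) : Pattern :=
  t.dropLast ++ [t.getLastD ∅ ∪ w.headD ∅] ++ w.tail

/-- Precondition for I-Extension: every item of the last itemset of `t`
precedes every item of the first itemset of `w`. -/
def IExtOK (t w : Pattern) : Prop :=
  t ≠ [] ∧ w ≠ [] ∧ ∀ i ∈ t.getLastD ∅, ∀ i' ∈ w.headD ∅, i < i'

/-- `t'` is an extension of `t` by a nonempty sequence `w` (I- or S-Extension). -/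
def IsExt (t t' : Pattern) : Prop :=
  ∃ w, w ≠ [] ∧ (t' = sExt t w ∨ (IExtOK t w ∧ t' = iExt t w))

/-- `t' = t ⋄ w` with `w` possibly empty. -/
def IsExtOrEq (t t' : Pattern) : Prop := t' = t ∨ IsExt t t'

/-- `t = tp ⋄ i`, a one-item extension. -/
def IsOneItemExt (tp t : Pattern) (i : Item) : Prop :=
  t = sExt tp [{i}] ∨ (IExtOK tp [{i}] ∧ t = iExt tp [{i}])

/-- `RSU(t,S)` where `tp` is the one-item-shorter prefix of `t`. -/
def rsuS (tp t : Pattern) (S : QSeq) : ℝ :=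
  if Contains t S then peu tp S else 0

/-- `RSU(t,D)`. -/
def rsuD (tp t : Pattern) (D : DB) : ℝ := ∑ S ∈ D, rsuS tp t S

/-- First (smallest) extension position of `t` in `S`. -/
def firstExtPos (t : Pattern) (S : QSeq) : ℕ := sInf {p | IsExtPos t S p}

/-- `TRSU(t,S)` where `tp` is the one-item-shorter prefix of `t`. -/
def trsuS (tp t : Pattern) (S : QSeq) : ℝ :=
  if Contains t S then
    if peu tp S = patUtilP tp S (firstExtPos tp S)
        + remUtil S (extIdx tp S (firstExtPos tp S)) then
      peu tp S -
        (remUtil S (extIdx tp S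
            (sSup {p | IsExtPos tp S p ∧ p ≤ firstExtPos t S})) -
         remUtil S (extIdx t S (firstExtPos t S) - 1))
    else rsuS tp t S
  else 0

/-- `TRSU(t,D)`. -/
def trsuD (tp t : Pattern) (D : DB) : ℝ := ∑ S ∈ D, trsuS tp t S

/-- `SWU(t,D)`. -/
def swu (t : Pattern) (D : DB) : ℝ :=
  ∑ S ∈ D, if Contains t S then seqUtil S else 0

/-- Pattern-level containment `t ⊑ t'`. -/
def PatSub (t t' : Pattern) : Prop :=
  ∃ js : List ℕ, js.length = t.length ∧ js.Pairwise (· < ·) ∧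
    (∀ j ∈ js, j < t'.length) ∧ ∀ p ∈ js.zip t, p.2 ⊆ t'.getD p.1 ∅


section AuxProofs

lemma flat_nonneg {S : QSeq} (hS : NonNegS S) : ∀ x ∈ flatUtils S, 0 ≤ x := by
  intro x hx
  simp only [flatUtils, List.mem_flatten, List.mem_map] at hx
  obtain ⟨_, ⟨E, hE, rfl⟩, hx⟩ := hx
  obtain ⟨i, _, rfl⟩ := List.mem_map.1 hx
  exact hS E hE i

lemma block_sum (E : QItemset) :
    (((E.support.sort (· ≤ ·)).map fun i => E i)).sum = ∑ i ∈ E.support, E i :=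
  calc ((E.support.sort (· ≤ ·)).map fun i => E i).sum
      = ((E.support.toList).map fun i => E i).sum :=
        ((Finset.sort_perm_toList _ _).map _).sum_eq
    _ = ∑ i ∈ E.support, E i := Finset.sum_map_toList _ _

lemma seqUtil_eq_flat (S : QSeq) : seqUtil S = (flatUtils S).sum := by
  simp only [seqUtil, flatUtils, List.sum_flatten, List.map_map]
  congr 1
  exact (List.map_congr_left fun E _ => (block_sum E).symm)

lemma seqUtil_nonneg {S : QSeq} (hS : NonNegS S) : 0 ≤ seqUtil S := by
  rw [seqUtil_eq_flat]
  exact List.sum_nonneg (flat_nonneg hS)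

lemma sum_eq_take_add_drop (l : List ℝ) (m : ℕ) :
    l.sum = (l.take m).sum + (l.drop m).sum := by
  conv_lhs => rw [← List.take_append_drop m l]
  rw [List.sum_append]

lemma remUtil_le_seqUtil {S : QSeq} (hS : NonNegS S) (m : ℕ) :
    remUtil S m ≤ seqUtil S := by
  rw [seqUtil_eq_flat, sum_eq_take_add_drop (flatUtils S) m]
  have h0 : 0 ≤ ((flatUtils S).take m).sum :=
    List.sum_nonneg fun x hx => flat_nonneg hS x (List.mem_of_mem_take hx)
  unfold remUtil
  linarith

lemma remUtil_nonneg {S : QSeq} (hS : NonNegS S) (m : ℕ) : 0 ≤ remUtil S m :=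
  List.sum_nonneg fun x hx => flat_nonneg hS x (List.mem_of_mem_drop hx)

lemma getD_nonneg {S : QSeq} (hS : NonNegS S) (m : ℕ) (i : Item) :
    0 ≤ (S.getD m 0) i := by
  by_cases h : m < S.length
  · rw [List.getD_eq_getElem _ _ h]
    exact hS _ (List.getElem_mem h) i
  · rw [List.getD_eq_default _ _ (le_of_not_gt h)]
    simp

lemma util_nonneg {S : QSeq} (hS : NonNegS S) (m : ℕ) :
    0 ≤ ∑ i ∈ (S.getD m 0).support, (S.getD m 0) i :=
  Finset.sum_nonneg fun i _ => getD_nonneg hS m i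

/-- Instance utility is bounded by the total utility of the positions used. -/
lemma instA {S : QSeq} (hS : NonNegS S) :
    ∀ (js : List ℕ) (t : Pattern) (F : Finset ℕ), js.Nodup →
      (∀ j ∈ js, j ∈ F) →
      (∀ pr ∈ js.zip t, pr.2 ⊆ (S.getD pr.1 0).support) →
      instUtil t S js ≤ ∑ m ∈ F, ∑ i ∈ (S.getD m 0).support, (S.getD m 0) i := by
  intro js
  induction js with
  | nil =>
      intro t F _ _ _
      simp only [instUtil, List.zip_nil_left, List.map_nil, List.sum_nil]
      exact Finset.sum_nonneg fun m _ => util_nonneg hS m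
  | cons j js IH =>
      intro t F hnd hmem hsub
      cases t with
      | nil =>
          simp only [instUtil, List.zip_nil_right, List.map_nil, List.sum_nil]
          exact Finset.sum_nonneg fun m _ => util_nonneg hS m
      | cons e t =>
          have hj : j ∈ F := hmem j List.mem_cons_self
          have heq : instUtil (e :: t) S (j :: js)
              = itemsetUtil e (S.getD j 0) + instUtil t S js := by
            simp [instUtil]
          rw [heq, ← Finset.add_sum_erase F _ hj]
          have h1 : itemsetUtil e (S.getD j 0)
              ≤ ∑ i ∈ (S.getD j 0).support, (S.getD j 0) i := by
            apply Finset.sum_le_sum_of_subset_of_nonneg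
            · exact hsub (j, e) (by simp)
            · intro i _ _; exact getD_nonneg hS j i
          have h2 : instUtil t S js
              ≤ ∑ m ∈ F.erase j, ∑ i ∈ (S.getD m 0).support, (S.getD m 0) i := by
            apply IH t (F.erase j) (List.Nodup.of_cons hnd)
            · intro m hm
              exact Finset.mem_erase.2 ⟨fun h => ((List.nodup_cons.1 hnd).1 (h ▸ hm)), hmem m (List.mem_cons_of_mem _ hm)⟩
            · intro pr hpr
              exact hsub pr (List.mem_cons_of_mem _ hpr)
          linarith

lemma take_map_sum (f : QItemset → ℝ) :
    ∀ (S : QSeq) (p : ℕ), p ≤ S.length →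
      ((S.take p).map f).sum = ∑ m ∈ Finset.range p, f (S.getD m 0)
  | _, 0, _ => by simp
  | [], _ + 1, h => by simp at h
  | E :: S, p + 1, h => by
      rw [List.take_succ_cons, List.map_cons, List.sum_cons,
        Finset.sum_range_succ', take_map_sum f S p (by simpa using h)]
      simp only [List.getD_cons_succ, List.getD_cons_zero]
      ring

/-- Key bound: the utility of an itemset `e` whose items are all `≤` the
extension item `a` is bounded by the prefix of the block. -/
lemma itemset_le_take {E : QItemset} (hE : ∀ i, 0 ≤ E i) {e : Finset Item}
    (hsub : e ⊆ E.support) {a : Item} (ha : a ∈ E.support) (hle : ∀ i ∈ e, i ≤ a) :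
    itemsetUtil e E
      ≤ ((((E.support.sort (· ≤ ·)).take ((E.support.sort (· ≤ ·)).idxOf a + 1))).map
          fun i => E i).sum := by
  set l := E.support.sort (· ≤ ·) with hl
  set k := l.idxOf a + 1 with hk
  have hndl : l.Nodup := Finset.sort_nodup _ _
  have hndk : (l.take k).Nodup := (List.take_sublist _ _).nodup hndl
  have hal : a ∈ l := (Finset.mem_sort _).2 ha
  have hidx : l.idxOf a < l.length := List.idxOf_lt_length_iff.2 hal
  have hmemtake : ∀ i ∈ e, i ∈ l.take k := by
    intro i hi
    have hia : i ≤ a := hle i hi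
    have hil : i ∈ l := (Finset.mem_sort _).2 (hsub hi)
    obtain ⟨m, hm, rfl⟩ := List.getElem_of_mem hil
    have hmk : m < k := by
      by_contra hge
      push_neg at hge
      have h2 : l[l.idxOf a]'hidx < l[m] :=
        List.pairwise_iff_getElem.1 (Finset.sortedLT_sort E.support).pairwise _ _ hidx hm (by omega)
      rw [List.getElem_idxOf] at h2
      exact absurd h2 (not_lt.2 hia)
    have hmt : m < (l.take k).length := by
      rw [List.length_take]; omega
    have heq : (l.take k)[m] = l[m] := List.getElem_take
    exact heq ▸ List.getElem_mem hmt
  have hle2 : itemsetUtil e E ≤ ∑ i ∈ (l.take k).toFinset, E i := by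
    apply Finset.sum_le_sum_of_subset_of_nonneg
    · intro i hi; exact List.mem_toFinset.2 (hmemtake i hi)
    · intro i _ _; exact hE i
  calc itemsetUtil e E ≤ ∑ i ∈ (l.take k).toFinset, E i := hle2
    _ = ((l.take k).map fun i => E i).sum := List.sum_toFinset _ hndk


lemma main_bound {t : Pattern} {S : QSeq} {js : List ℕ} {p : ℕ}
    (hS : NonNegS S) (hins : IsInstance t S js) (hlast : js.getLast? = some p) :
    instUtil t S js + remUtil S (extIdx t S p) ≤ seqUtil S := by
  obtain ⟨hlen, hsort, hbnd, hsub⟩ := hins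
  have hjne : js ≠ [] := by rintro rfl; simp at hlast
  have htne : t ≠ [] := by
    rintro rfl
    exact hjne (List.length_eq_zero_iff.1 (by simpa using hlen))
  have hpj : p = js.getLast hjne := by
    rw [List.getLast?_eq_getLast hjne] at hlast
    exact (Option.some.inj hlast).symm
  have hjs : js = js.dropLast ++ [p] := by
    conv_lhs => rw [← List.dropLast_append_getLast hjne]
    rw [hpj]
  have hts : t = t.dropLast ++ [t.getLast htne] :=
    (List.dropLast_append_getLast htne).symm
  set js' := js.dropLast with hjs'
  set t' := t.dropLast with ht'
  set e := t.getLast htne with hedef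
  have hlen' : js'.length = t'.length := by
    rw [hjs', ht', List.length_dropLast, List.length_dropLast, hlen]
  have hzip : js.zip t = js'.zip t' ++ [(p, e)] := by
    conv_lhs => rw [hjs, hts]
    rw [List.zip_append hlen']
    rfl
  have hinst_split : instUtil t S js
      = instUtil t' S js' + itemsetUtil e (S.getD p 0) := by
    unfold instUtil
    rw [hzip, List.map_append, List.sum_append]
    simp
  have hpS : p < S.length := hbnd p (by rw [hjs]; simp)
  have hple : p ≤ S.length := le_of_lt hpS
  set E := S.getD p 0 with hEdef
  set l := E.support.sort (· ≤ ·) with hldef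
  set a := extItem t with hadef
  set k := l.idxOf a + 1 with hkdef
  have hextlast : t.getLastD ∅ = e := by
    rw [List.getLastD_eq_getLast?, List.getLast?_eq_getLast htne]
    rfl
  have hpe : e ⊆ E.support := hsub (p, e) (by rw [hzip]; simp)
  have hsub' : ∀ pr ∈ js'.zip t', pr.2 ⊆ (S.getD pr.1 0).support := fun pr hpr =>
    hsub pr (by rw [hzip]; exact List.mem_append_left _ hpr)
  rw [hjs] at hsort
  obtain ⟨hs1, -, hlt⟩ := List.pairwise_append.1 hsort
  have hjlt : ∀ j ∈ js', j < p := fun j hj => hlt j hj p (List.mem_singleton_self _)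
  have hnd' : js'.Nodup := hs1.imp ne_of_lt
  have hEnn : ∀ i, 0 ≤ E i := fun i => getD_nonneg hS p i
  -- bound on the sub-instance
  have hA : instUtil t' S js'
      ≤ ∑ m ∈ Finset.range p, ∑ i ∈ (S.getD m 0).support, (S.getD m 0) i :=
    instA hS js' t' (Finset.range p) hnd'
      (fun j hj => Finset.mem_range.2 (hjlt j hj)) hsub'
  -- bound on the last itemset
  have hB : itemsetUtil e E ≤ ((l.take k).map fun i => E i).sum := by
    rcases e.eq_empty_or_nonempty with hemp | hne
    · have h0 : (0:ℝ) ≤ ((l.take k).map fun i => E i).sum := by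
        apply List.sum_nonneg
        intro x hx
        obtain ⟨i, -, rfl⟩ := List.mem_map.1 hx
        exact hEnn i
      have hz : itemsetUtil e E = 0 := by rw [itemsetUtil, hemp]; simp
      rw [hz]; exact h0
    · have hamax : a = e.max' hne := by
        rw [hadef, extItem, hextlast, ← Finset.coe_max' hne, WithBot.unbotD_coe]
      have haE : a ∈ E.support := hpe (hamax ▸ e.max'_mem hne)
      have hlea : ∀ i ∈ e, i ≤ a := fun i hi => hamax ▸ e.le_max' i hi
      exact itemset_le_take hEnn hpe haE hlea
  -- structural decomposition of the flattened utility list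
  set bl : QItemset → List ℝ := fun F => (F.support.sort (· ≤ ·)).map fun i => F i
    with hbl
  set L1 := ((S.take p).map bl).flatten with hL1
  set L2 := ((S.drop p).map bl).flatten with hL2
  have hflat : flatUtils S = L1 ++ L2 := by
    rw [hL1, hL2, flatUtils]
    conv_lhs => rw [← List.take_append_drop p S]
    rw [List.map_append, List.flatten_append]
  have hL1len : L1.length = ((S.take p).map fun F => F.support.card).sum := by
    rw [hL1, List.length_flatten, List.map_map]
    congr 1
    apply List.map_congr_left
    intro F _
    simp [hbl, Finset.length_sort]
  have hM : extIdx t S p = L1.length + k := by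
    rw [extIdx, flatIdx, hL1len, hkdef, hadef, ← hEdef, ← hldef]
    omega
  have hrem : remUtil S (extIdx t S p) = (L2.drop k).sum := by
    rw [remUtil, hflat, hM, List.drop_append]
    simp [List.drop_eq_nil_of_le (Nat.le_add_right L1.length k)]
  have hL1sum : L1.sum
      = ∑ m ∈ Finset.range p, ∑ i ∈ (S.getD m 0).support, (S.getD m 0) i := by
    rw [hL1, List.sum_flatten, List.map_map]
    rw [show (List.sum ∘ bl) = fun F => ∑ i ∈ F.support, F i from
      funext fun F => block_sum F]
    exact take_map_sum _ S p hple
  have hL2eq : L2 = bl E ++ ((S.drop (p + 1)).map bl).flatten := by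
    rw [hL2, List.drop_eq_getElem_cons hpS, List.map_cons, List.flatten_cons,
      hEdef, List.getD_eq_getElem S 0 hpS]
  have hL2nn : ∀ x ∈ L2, 0 ≤ x := by
    intro x hx
    rw [hL2] at hx
    simp only [List.mem_flatten, List.mem_map] at hx
    obtain ⟨-, ⟨F, hF, rfl⟩, hx⟩ := hx
    obtain ⟨i, -, rfl⟩ := List.mem_map.1 hx
    exact hS F (List.mem_of_mem_drop hF) i
  have htk : ((l.take k).map fun i => E i).sum ≤ (L2.take k).sum := by
    rw [hL2eq, List.take_append, List.sum_append]
    have h1 : ((l.take k).map fun i => E i).sum = ((bl E).take k).sum := by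
      rw [hbl]
      simp only []
      rw [List.map_take]
    have h2 : (0:ℝ) ≤ (((((S.drop (p + 1)).map bl).flatten)).take (k - (bl E).length)).sum := by
      apply List.sum_nonneg
      intro x hx
      have hx2 := List.mem_of_mem_take hx
      simp only [List.mem_flatten, List.mem_map] at hx2
      obtain ⟨-, ⟨F, hF, rfl⟩, hx2⟩ := hx2
      obtain ⟨i, -, rfl⟩ := List.mem_map.1 hx2
      exact hS F (List.mem_of_mem_drop hF) i
    linarith
  have hseq : seqUtil S = L1.sum + (L2.take k).sum + (L2.drop k).sum := by
    rw [seqUtil_eq_flat, hflat, List.sum_append, sum_eq_take_add_drop L2 k]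
    ring
  rw [hinst_split, hrem, hseq]
  linarith

end AuxProofs

/-- PEU is at most SWU: `PEU(t,S) ≤ u(S)` whenever `t ⊑ S`, and
hence `PEU(t,D) ≤ SWU(t,D)`. -/
theorem peu_le_seqUtil_and_peuD_le_swu (t : Pattern) :
    (∀ S : QSeq, NonNegS S → Contains t S → peu t S ≤ seqUtil S) ∧
      ∀ D : DB, (∀ S ∈ D, NonNegS S) → peuD t D ≤ swu t D := by
  have key : ∀ S : QSeq, NonNegS S → peu t S ≤ seqUtil S := by
    intro S hS
    have h0 : 0 ≤ seqUtil S := seqUtil_nonneg hS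
    rw [peu]
    split_ifs with ht
    · exact le_rfl
    · apply Real.sSup_le _ h0
      rintro x ⟨p, -, rfl⟩
      rw [peuP]
      split_ifs with hcond
      · have hrem : remUtil S (extIdx t S p) ≤ seqUtil S := remUtil_le_seqUtil hS _
        have hpat : patUtilP t S p ≤ seqUtil S - remUtil S (extIdx t S p) := by
          apply Real.sSup_le _ (by linarith)
          rintro y ⟨js, hins, hlast, rfl⟩
          linarith [main_bound hS hins hlast]
        linarith
      · exact h0
  constructor
  · exact fun S hS _ => key S hS
  · intro D hD
    apply Finset.sum_le_sum
    intro S hSD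
    split_ifs with hC
    · exact key S (hD S hSD)
    · exact le_rfl
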